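/- Let P be an increasing graph property. Any theorem for n-sequences whose hypothesis is a conjunction of P-weakly-optimal Chvátal-type conditions and whose conclusion is that the sequence is forcibly P must contain at least s(n,P) conditions, where s(n,P) is the number of sinks (maximal elements under majorization) of the P-subposet. Concretely: if a set S of P-weakly-optimal Chvátal-type conditions has the property that every graphical sequence satisfying all conditions in S is forcibly P, then for each sink π the condition C(π) belongs to S (up to equivalence), so |S| ≥ s(n,P). -/

import Mathlib

open SimpleGraph

/-- Degree of a vertex. -/
noncomputable def ndeg {V : Type*} (G : SimpleGraph V) (v : V) : ℕ :=
  Nat.card {u | G.Adj v u}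

/-- `G` (a graph on `Fin n`) realizes the sequence `π`. -/
def RealizesF {n : ℕ} (G : SimpleGraph (Fin n)) (π : Fin n → ℕ) : Prop :=
  ∃ e : Equiv.Perm (Fin n), ∀ i, ndeg G (e i) = π i

/-- A Chvátal-type condition `d_{i_1} ≥ k_{i_1} ∨ … ∨ d_{i_r} ≥ k_{i_r}`. -/
structure ChvatalCond (n : ℕ) where
  idx : Finset (Fin n)
  bound : Fin n → ℕ
  idx_nonempty : idx.Nonempty
  bound_mono : ∀ i ∈ idx, ∀ j ∈ idx, i ≤ j → bound i ≤ bound j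
  bound_range : ∀ i ∈ idx, 1 ≤ bound i ∧ bound i ≤ n

/-- A sequence `d` satisfies a Chvátal-type condition. -/
def ChvatalCond.Sat {n : ℕ} (c : ChvatalCond n) (d : Fin n → ℕ) : Prop :=
  ∃ i ∈ c.idx, c.bound i ≤ d i

/-- `G` is edge-maximal without the (increasing) property `P`. -/
def EdgeMaxNon {n : ℕ} (P : SimpleGraph (Fin n) → Prop) (G : SimpleGraph (Fin n)) : Prop :=
  ¬ P G ∧ ∀ H, G < H → P H

/-- `π` is a sink of the `P`-subposet: it is the (nondecreasing) degree sequence of an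
edge-maximal non-`P` graph and is maximal under majorization among such sequences. -/
def IsSink (n : ℕ) (P : SimpleGraph (Fin n) → Prop) (π : Fin n → ℕ) : Prop :=
  Monotone π ∧ (∃ G, EdgeMaxNon P G ∧ RealizesF G π) ∧
    ∀ π' : Fin n → ℕ, Monotone π' → (∃ G, EdgeMaxNon P G ∧ RealizesF G π') →
      π ≤ π' → π' = π

/-- `c` is `P`-weakly-optimal: every nondecreasing `n`-sequence violating `c` is majorized
by a graphical sequence having a realization without property `P`. -/
def WeaklyOpt (n : ℕ) (P : SimpleGraph (Fin n) → Prop) (c : ChvatalCond n) : Prop :=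
  ∀ d : Fin n → ℕ, Monotone d → (∀ j, d j ≤ n - 1) → ¬ c.Sat d →
    ∃ π' : Fin n → ℕ, Monotone π' ∧ d ≤ π' ∧ ∃ G, RealizesF G π' ∧ ¬ P G

lemma ndeg_mono {n : ℕ} {G H : SimpleGraph (Fin n)} (h : G ≤ H) (v : Fin n) :
    ndeg G v ≤ ndeg H v := by
  unfold ndeg
  rw [Nat.card_coe_set_eq, Nat.card_coe_set_eq]
  exact Set.ncard_le_ncard (fun u hu => h hu) (Set.toFinite _)

lemma ndeg_le {n : ℕ} (G : SimpleGraph (Fin n)) (v : Fin n) : ndeg G v ≤ n - 1 := by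
  unfold ndeg
  rw [Nat.card_coe_set_eq]
  have h1 : {u | G.Adj v u} ⊆ ({v}ᶜ : Set (Fin n)) := by
    intro u hu
    simp only [Set.mem_compl_iff, Set.mem_singleton_iff]
    exact fun e => G.irrefl (e ▸ hu)
  calc Set.ncard {u | G.Adj v u} ≤ Set.ncard ({v}ᶜ : Set (Fin n)) :=
        Set.ncard_le_ncard h1 (Set.toFinite _)
    _ = n - 1 := by
        rw [Set.ncard_eq_toFinset_card']
        simp [Finset.card_compl]

lemma exists_sorted {n : ℕ} (H : SimpleGraph (Fin n)) :
    ∃ π : Fin n → ℕ, Monotone π ∧ RealizesF H π := by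
  refine ⟨ndeg H ∘ Tuple.sort (ndeg H), Tuple.monotone_sort _, Tuple.sort (ndeg H), fun i => rfl⟩

lemma exists_edgemax {n : ℕ} (P : SimpleGraph (Fin n) → Prop) (G : SimpleGraph (Fin n))
    (hG : ¬ P G) : ∃ H, G ≤ H ∧ EdgeMaxNon P H := by
  classical
  have hfin : {H : SimpleGraph (Fin n) | G ≤ H ∧ ¬ P H}.Finite := Set.toFinite _
  obtain ⟨H, ⟨hGH, hHP⟩, hmax⟩ := Set.Finite.exists_maximal hfin ⟨G, le_refl G, hG⟩
  refine ⟨H, hGH, hHP, fun H' hlt => ?_⟩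
  by_contra hP'
  exact lt_irrefl _ (lt_of_lt_of_le hlt (hmax ⟨le_trans hGH hlt.le, hP'⟩ hlt.le))

lemma sorted_comp_le {n : ℕ} (a b s t : Fin n → ℕ) (σ τ : Equiv.Perm (Fin n))
    (hs : Monotone s) (ht : Monotone t) (ha : ∀ i, s i = a (σ i)) (hb : ∀ i, t i = b (τ i))
    (hab : ∀ v, a v ≤ b v) : s ≤ t := by
  intro i
  by_contra hlt
  push_neg at hlt
  classical
  set A : Finset (Fin n) := Finset.univ.filter (fun v => s i ≤ a v) with hA
  set B : Finset (Fin n) := Finset.univ.filter (fun v => b v < s i) with hB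
  have hdisj : Disjoint A B := by
    rw [Finset.disjoint_left]
    intro v hv hv'
    simp only [hA, hB, Finset.mem_filter] at hv hv'
    exact absurd (le_trans hv.2 (hab v)) (not_le.2 hv'.2)
  have hcA : n - i.val ≤ A.card := by
    have hsub : (Finset.Ici i).image σ ⊆ A := by
      intro v hv
      obtain ⟨j, hj, rfl⟩ := Finset.mem_image.1 hv
      simp only [hA, Finset.mem_filter]
      exact ⟨Finset.mem_univ _, (ha j) ▸ hs (Finset.mem_Ici.1 hj)⟩
    calc n - i.val = (Finset.Ici i).card := (Fin.card_Ici i).symm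
      _ = ((Finset.Ici i).image σ).card := (Finset.card_image_of_injective _ σ.injective).symm
      _ ≤ A.card := Finset.card_le_card hsub
  have hcB : i.val + 1 ≤ B.card := by
    have hsub : (Finset.Iic i).image τ ⊆ B := by
      intro v hv
      obtain ⟨j, hj, rfl⟩ := Finset.mem_image.1 hv
      simp only [hB, Finset.mem_filter]
      exact ⟨Finset.mem_univ _, lt_of_le_of_lt ((hb j) ▸ ht (Finset.mem_Iic.1 hj)) hlt⟩
    calc i.val + 1 = (Finset.Iic i).card := (Fin.card_Iic i).symm
      _ = ((Finset.Iic i).image τ).card := (Finset.card_image_of_injective _ τ.injective).symm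
      _ ≤ B.card := Finset.card_le_card hsub
  have hun : A.card + B.card ≤ n := by
    rw [← Finset.card_union_of_disjoint hdisj]
    calc (A ∪ B).card ≤ Finset.univ.card := Finset.card_le_card (Finset.subset_univ _)
      _ = n := by simp
  have := i.isLt
  omega

theorem stmt6 (n : ℕ) (P : SimpleGraph (Fin n) → Prop)
    (hP : ∀ G H, G ≤ H → P G → P H)
    (S : Finset (ChvatalCond n))
    (hSwo : ∀ c ∈ S, WeaklyOpt n P c)
    -- the theorem: every graphical nondecreasing n-sequence satisfying all conditions
    -- in S is forcibly P
    (hthm : ∀ d : Fin n → ℕ, Monotone d → (∀ j, d j ≤ n - 1) →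
      (∃ G, RealizesF G d) → (∀ c ∈ S, c.Sat d) → ∀ G, RealizesF G d → P G) :
    -- conclusion: for every sink π, some condition of S is equivalent to C(π);
    -- consequently S contains at least as many conditions as there are sinks
    (∀ π : Fin n → ℕ, IsSink n P π → ∃ c ∈ S,
      ∀ d : Fin n → ℕ, Monotone d → (∀ j, d j ≤ n - 1) →
        (c.Sat d ↔ ∃ j, π j + 1 ≤ d j)) ∧
    {π : Fin n → ℕ | IsSink n P π}.ncard ≤ S.card := by
  classical
  have part1 : ∀ π : Fin n → ℕ, IsSink n P π → ∃ c ∈ S,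
      ∀ d : Fin n → ℕ, Monotone d → (∀ j, d j ≤ n - 1) →
        (c.Sat d ↔ ∃ j, π j + 1 ≤ d j) := by
    intro π hπ
    obtain ⟨hmono, ⟨G, hGmax, hGreal⟩, hmax⟩ := hπ
    have hπle : ∀ j, π j ≤ n - 1 := by
      intro j
      obtain ⟨e, he⟩ := hGreal
      exact (he j) ▸ ndeg_le G (e j)
    have hnotall : ¬ ∀ c ∈ S, c.Sat π :=
      fun h => hGmax.1 (hthm π hmono hπle ⟨G, hGreal⟩ h G hGreal)
    push_neg at hnotall
    obtain ⟨c, hcS, hcπ⟩ := hnotall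
    refine ⟨c, hcS, fun d hd hdle => ?_⟩
    have hback : ¬ c.Sat d → ∀ j, d j ≤ π j := by
      intro hcd
      set e : Fin n → ℕ := fun j => max (d j) (π j) with he
      have hemono : Monotone e := hd.max hmono
      have hele : ∀ j, e j ≤ n - 1 := fun j => max_le (hdle j) (hπle j)
      have hce : ¬ c.Sat e := by
        rintro ⟨i, hi, hbd⟩
        rcases le_max_iff.1 hbd with h | h
        · exact hcd ⟨i, hi, h⟩
        · exact hcπ ⟨i, hi, h⟩
      obtain ⟨π', hπ'mono, heπ', G', hG'real, hG'P⟩ := hSwo c hcS e hemono hele hce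
      obtain ⟨H, hGH, hHmax⟩ := exists_edgemax P G' hG'P
      obtain ⟨π'', hπ''mono, hHreal⟩ := exists_sorted H
      obtain ⟨e1, he1⟩ := hG'real
      obtain ⟨e2, he2⟩ := hHreal
      have hπ'π'' : π' ≤ π'' :=
        sorted_comp_le (ndeg G') (ndeg H) π' π'' e1 e2 hπ'mono hπ''mono
          (fun i => (he1 i).symm) (fun i => (he2 i).symm) (fun v => ndeg_mono hGH v)
      have hππ'' : π ≤ π'' := fun j =>
        le_trans (le_max_right (d j) (π j)) (le_trans (heπ' j) (hπ'π'' j))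
      have heq : π'' = π := hmax π'' hπ''mono ⟨H, hHmax, e2, he2⟩ hππ''
      intro j
      calc d j ≤ e j := le_max_left _ _
        _ ≤ π' j := heπ' j
        _ ≤ π'' j := hπ'π'' j
        _ = π j := by rw [heq]
    constructor
    · rintro hsat
      by_contra hne
      push_neg at hne
      obtain ⟨i, hi, hbd⟩ := hsat
      exact hcπ ⟨i, hi, le_trans hbd (by have := hne i; omega)⟩
    · intro ⟨j, hj⟩
      by_contra hcd
      have := hback hcd j
      omega
  refine ⟨part1, ?_⟩
  rcases Set.eq_empty_or_nonempty {π : Fin n → ℕ | IsSink n P π} with hemp | ⟨π₀, hπ₀⟩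
  · simp [hemp]
  · obtain ⟨c₀, hc₀S, _⟩ := part1 π₀ hπ₀
    set f : (Fin n → ℕ) → ChvatalCond n := fun π =>
      if h : IsSink n P π then (part1 π h).choose else c₀ with hf
    have hmaps : ∀ π ∈ {π : Fin n → ℕ | IsSink n P π}, f π ∈ (S : Set (ChvatalCond n)) := by
      intro π hπ
      simp only [Set.mem_setOf_eq] at hπ
      simp only [hf, dif_pos hπ]
      exact (part1 π hπ).choose_spec.1
    have hinj : Set.InjOn f {π : Fin n → ℕ | IsSink n P π} := by
      intro π₁ h₁ π₂ h₂ heq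
      simp only [Set.mem_setOf_eq] at h₁ h₂
      simp only [hf] at heq
      rw [dif_pos h₁, dif_pos h₂] at heq
      have s₁ := (part1 π₁ h₁).choose_spec.2
      have s₂ := (part1 π₂ h₂).choose_spec.2
      rw [heq] at s₁
      have key : ∀ (a b : Fin n → ℕ), IsSink n P b →
          (∀ d : Fin n → ℕ, Monotone d → (∀ j, d j ≤ n - 1) →
            ((∃ j, a j + 1 ≤ d j) ↔ (∃ j, b j + 1 ≤ d j))) → b ≤ a := by
        intro a b hb hiff j
        have hble : ∀ j, b j ≤ n - 1 := by
          intro j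
          obtain ⟨G, _, e, he⟩ := hb.2.1
          exact (he j) ▸ ndeg_le G (e j)
        by_contra hj
        have hjlt : a j < b j := lt_of_not_ge hj
        have : ∃ j, b j + 1 ≤ b j := (hiff b hb.1 hble).1 ⟨j, hjlt⟩
        obtain ⟨k, hk⟩ := this
        omega
      have hiff12 : ∀ d : Fin n → ℕ, Monotone d → (∀ j, d j ≤ n - 1) →
          ((∃ j, π₁ j + 1 ≤ d j) ↔ (∃ j, π₂ j + 1 ≤ d j)) := by
        intro d hd hdle
        rw [← s₁ d hd hdle, s₂ d hd hdle]
      have h21 : π₂ ≤ π₁ := key π₁ π₂ h₂ hiff12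
      have h12 : π₁ ≤ π₂ := key π₂ π₁ h₁ (fun d hd hdle => (hiff12 d hd hdle).symm)
      exact funext fun j => le_antisymm (h12 j) (h21 j)
    have := Set.ncard_le_ncard_of_injOn f hmaps hinj S.finite_toSet
    simpa using this
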